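/- Let (G,≾) be a compatible quasi-ordered abelian group and H a ≾-convex subgroup of G. The quasi-order induced by ≾ on G/H is valuational if and only if G^o ⊆ H. In particular, G^o is the smallest ≾-convex subgroup of G such that the induced quasi-order on the quotient is valuational. -/

import Mathlib

universe u

variable {G : Type u} [AddCommGroup G]

/-- `r` is a total quasi-order: reflexive, transitive, any two elements comparable. -/
def TotalQO (r : G → G → Prop) : Prop :=
  (∀ x, r x x) ∧ (∀ x y z, r x y → r y z → r x z) ∧ (∀ x y, r x y ∨ r y x)

/-- Axiom (Q1): `x ∼ 0 → x = 0`. -/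
def AxQ1 (r : G → G → Prop) : Prop := ∀ x, r x 0 → r 0 x → x = 0

/-- Axiom (Q2): `x ≾ y ∧ ¬(y ∼ z) → x + z ≾ y + z`. -/
def AxQ2 (r : G → G → Prop) : Prop :=
  ∀ x y z, r x y → ¬(r y z ∧ r z y) → r (x + z) (y + z)

/-- A compatible quasi-ordered abelian group: a total quasi-order satisfying (Q1) and (Q2). -/
def Compatible (r : G → G → Prop) : Prop := TotalQO r ∧ AxQ1 r ∧ AxQ2 r

/-- `g` is o-type: its `∼`-class is a singleton and `g` does not have order 2. -/
def OType (r : G → G → Prop) (g : G) : Prop :=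
  (∀ h, r h g → r g h → h = g) ∧ (g + g = 0 → g = 0)

/-- `g` is v-type: its `∼`-class is not a singleton, or `g + g = 0`. -/
def VType (r : G → G → Prop) (g : G) : Prop :=
  (∃ h, h ≠ g ∧ r h g ∧ r g h) ∨ g + g = 0

/-- A group valuation with values in `WithTop Γ` (`⊤` playing the role of `∞`). -/
def IsValuation {A : Type u} [AddCommGroup A] {Γ : Type u} [LinearOrder Γ]
    (v : A → WithTop Γ) : Prop :=
  (∀ g, v g = ⊤ ↔ g = 0) ∧ (∀ g, v (-g) = v g) ∧
  (∀ g h, min (v g) (v h) ≤ v (g + h))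

/-- A quasi-order is valuational if it is induced by some valuation:
`g ≾ h ↔ v g ≥ v h`. -/
def Valuational {A : Type u} [AddCommGroup A] (r : A → A → Prop) : Prop :=
  ∃ (Γ : Type u) (_ : LinearOrder Γ) (v : A → WithTop Γ),
    IsValuation v ∧ ∀ g h, r g h ↔ v h ≤ v g

/-- for a `≾`-convex subgroup `H` of a compatible q.o.a.g, the
quasi-order induced on `G ⧸ H` is valuational iff `G^o ⊆ H`; in particular
`G^o` is the smallest such convex subgroup. -/
theorem quotient_valuational_iff_otype_subset (r : G → G → Prop)
    (hc : Compatible r) (H : AddSubgroup G)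
    (hconv : ∀ s t a : G, s ∈ H → t ∈ H → r s a → r a t → a ∈ H)
    (R : G ⧸ H → G ⧸ H → Prop)
    (hR : ∀ g h : G, R (g : G ⧸ H) (h : G ⧸ H) ↔
      (g - h ∈ H ∨ (g - h ∉ H ∧ r g h))) :
    Valuational R ↔ (∀ g : G, OType r g → g ∈ H) := by
  classical
  obtain ⟨⟨hrefl, htrans, htotal⟩, hq1, hq2⟩ := hc
  -- If `a` is not equivalent to `-a`, then `a` is o-type.
  have otype_crit : ∀ a : G, ¬(r a (-a) ∧ r (-a) a) → OType r a := by
    intro a hna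
    constructor
    · intro h h1 h2
      have e1 : r (h + -a) (a + -a) := hq2 h a (-a) h1 hna
      have e2 : r (a + -a) (h + -a) := by
        refine hq2 a h (-a) h2 ?_
        rintro ⟨c1, c2⟩
        exact hna ⟨htrans _ _ _ h2 c1, htrans _ _ _ c2 h1⟩
      rw [add_neg_cancel] at e1 e2
      have := hq1 (h + -a) e1 e2
      have : h - a = 0 := by rwa [sub_eq_add_neg]
      exact sub_eq_zero.mp this
    · intro h2a
      have hne : -a = a := neg_eq_of_add_eq_zero_left h2a
      exact absurd ⟨by rw [hne]; exact hrefl a, by rw [hne]; exact hrefl a⟩ hna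
  constructor
  · -- valuational ⇒ o-type elements lie in H
    rintro ⟨Γ, _, v, ⟨hv1, hv2, hv3⟩, hvr⟩ g hg
    have hcast : ((-g : G) : G ⧸ H) = -(g : G ⧸ H) := QuotientAddGroup.mk_neg H g
    have hneg : v (-(g : G ⧸ H)) = v (g : G ⧸ H) := hv2 _
    have h1 : R ((-g : G) : G ⧸ H) (g : G ⧸ H) := by
      rw [hvr, hcast, hneg]
    have h2 : R (g : G ⧸ H) ((-g : G) : G ⧸ H) := by
      rw [hvr, hcast, hneg]
    rw [hR] at h1 h2
    have hgg : g + g ∈ H := by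
      rcases h1 with hm | ⟨hn1, hr1⟩
      · have : -(g + g) ∈ H := by
          have : -g - g = -(g + g) := by abel
          rwa [this] at hm
        simpa using H.neg_mem this
      rcases h2 with hm | ⟨hn2, hr2⟩
      · have : g - -g = g + g := by abel
        rwa [this] at hm
      · exfalso
        have heq : -g = g := hg.1 (-g) hr1 hr2
        have hz : g - -g = 0 := by rw [heq]; exact sub_self g
        exact hn2 (hz ▸ H.zero_mem)
    -- now `g + g ∈ H` and `g` o-type imply `g ∈ H`
    rcases htotal g 0 with hg0 | h0g
    · by_cases h0g : r 0 g
      · have : g = 0 := hq1 g hg0 h0g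
        exact this ▸ H.zero_mem
      · have step : r (g + g) (0 + g) := hq2 g 0 g hg0 (fun c => h0g c.1)
        rw [zero_add] at step
        exact hconv (g + g) 0 g hgg H.zero_mem step hg0
    · by_cases hg0 : r g 0
      · have : g = 0 := hq1 g hg0 h0g
        exact this ▸ H.zero_mem
      · have hgne : g ≠ 0 := fun h => hg0 (h ▸ hrefl (0 : G))
        have hnsim : ¬(r g (-g) ∧ r (-g) g) := by
          rintro ⟨c1, c2⟩
          have heq : -g = g := hg.1 (-g) c2 c1
          have : g + g = 0 := by
            have := congrArg (fun x => g + x) heq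
            simpa using this.symm
          exact hgne (hg.2 this)
        have e1 : r (0 + -g) (g + -g) := hq2 0 g (-g) h0g hnsim
        rw [zero_add, add_neg_cancel] at e1
        have hggne : ¬(r 0 (g + g) ∧ r (g + g) 0) := by
          rintro ⟨c1, c2⟩
          exact hgne (hg.2 (hq1 _ c2 c1))
        have e2 : r (-g + (g + g)) (0 + (g + g)) := hq2 (-g) 0 (g + g) e1 hggne
        rw [zero_add, neg_add_cancel_left] at e2
        exact hconv 0 (g + g) g H.zero_mem hgg h0g e2
  · -- o-type elements in H ⇒ valuational
    intro hsub
    have hS : ∀ a : G, a ∉ H → r a (-a) ∧ r (-a) a := by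
      intro a ha
      by_contra hna
      exact ha (hsub a (otype_crit a hna))
    have hZ : ∀ a : G, a ∉ H → ¬r a 0 ∧ r 0 a := by
      intro a ha
      have hane : a ≠ 0 := by rintro rfl; exact ha H.zero_mem
      have hnot : ¬r a 0 := by
        intro ha0
        by_cases h0a : r 0 a
        · exact hane (hq1 a ha0 h0a)
        · have hcond : ¬(r 0 (-a) ∧ r (-a) 0) := by
            rintro ⟨c1, c2⟩
            exact hane (neg_eq_zero.mp (hq1 _ c2 c1))
          have e : r (a + -a) (0 + -a) := hq2 a 0 (-a) ha0 hcond
          rw [add_neg_cancel, zero_add] at e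
          exact h0a (htrans _ _ _ e (hS a ha).2)
      exact ⟨hnot, (htotal 0 a).resolve_right hnot⟩
    have negmemiff : ∀ a b : G, a - b ∉ H → b - a ∉ H := by
      intro a b hab m
      exact hab (by simpa [neg_sub] using H.neg_mem m)
    -- basic properties of R
    have Rrefl : ∀ x : G ⧸ H, R x x := by
      intro x
      obtain ⟨a, rfl⟩ := QuotientAddGroup.mk_surjective x
      exact (hR a a).mpr (Or.inl (by simpa using H.zero_mem))
    have Rtrans : ∀ x y z : G ⧸ H, R x y → R y z → R x z := by
      intro x y z hxy hyz
      obtain ⟨a, rfl⟩ := QuotientAddGroup.mk_surjective x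
      obtain ⟨b, rfl⟩ := QuotientAddGroup.mk_surjective y
      obtain ⟨c, rfl⟩ := QuotientAddGroup.mk_surjective z
      rw [hR] at hxy hyz
      rcases hxy with hab | ⟨hab, rab⟩
      · have e : (a : G ⧸ H) = b := (QuotientAddGroup.eq_iff_sub_mem).mpr hab
        rw [e]
        exact (hR b c).mpr hyz
      · rcases hyz with hbc | ⟨hbc, rbc⟩
        · have e : (b : G ⧸ H) = c := (QuotientAddGroup.eq_iff_sub_mem).mpr hbc
          rw [← e]
          exact (hR a b).mpr (Or.inr ⟨hab, rab⟩)
        · rw [hR]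
          by_cases hac : a - c ∈ H
          · exact Or.inl hac
          · exact Or.inr ⟨hac, htrans a b c rab rbc⟩
    have Rtotal : ∀ x y : G ⧸ H, R x y ∨ R y x := by
      intro x y
      obtain ⟨a, rfl⟩ := QuotientAddGroup.mk_surjective x
      obtain ⟨b, rfl⟩ := QuotientAddGroup.mk_surjective y
      by_cases hab : a - b ∈ H
      · exact Or.inl ((hR a b).mpr (Or.inl hab))
      · rcases htotal a b with h | h
        · exact Or.inl ((hR a b).mpr (Or.inr ⟨hab, h⟩))
        · exact Or.inr ((hR b a).mpr (Or.inr ⟨negmemiff a b hab, h⟩))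
    have RQ2 : ∀ x y z : G ⧸ H, R x y → ¬(R y z ∧ R z y) → R (x + z) (y + z) := by
      intro x y z hxy hnRR
      obtain ⟨a, rfl⟩ := QuotientAddGroup.mk_surjective x
      obtain ⟨b, rfl⟩ := QuotientAddGroup.mk_surjective y
      obtain ⟨c, rfl⟩ := QuotientAddGroup.mk_surjective z
      have hbc : b - c ∉ H := by
        intro m
        have m' : c - b ∈ H := by simpa [neg_sub] using H.neg_mem m
        exact hnRR ⟨(hR b c).mpr (Or.inl m), (hR c b).mpr (Or.inl m')⟩
      have hnsim : ¬(r b c ∧ r c b) := by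
        rintro ⟨u, w⟩
        exact hnRR ⟨(hR b c).mpr (Or.inr ⟨hbc, u⟩), (hR c b).mpr (Or.inr ⟨negmemiff b c hbc, w⟩)⟩
      rw [← QuotientAddGroup.mk_add, ← QuotientAddGroup.mk_add]
      rw [hR] at hxy ⊢
      have hsubeq : (a + c) - (b + c) = a - b := by abel
      rcases hxy with hab | ⟨hab, rab⟩
      · exact Or.inl (by rwa [hsubeq])
      · have := hq2 a b c rab hnsim
        by_cases h : (a + c) - (b + c) ∈ H
        · exact Or.inl h
        · exact Or.inr ⟨h, this⟩
    have Rsymneg : ∀ x : G ⧸ H, R x (-x) ∧ R (-x) x := by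
      intro x
      obtain ⟨a, rfl⟩ := QuotientAddGroup.mk_surjective x
      have hcast : -((a : G) : G ⧸ H) = ((-a : G) : G ⧸ H) := (QuotientAddGroup.mk_neg H a).symm
      by_cases hm : a - -a ∈ H
      · constructor <;> rw [hcast]
        · exact (hR a (-a)).mpr (Or.inl hm)
        · refine (hR (-a) a).mpr (Or.inl ?_)
          have h2 := H.neg_mem hm
          rwa [neg_sub] at h2
      · have haH : a ∉ H := fun h => hm (by simpa [sub_neg_eq_add] using H.add_mem h h)
        obtain ⟨s1, s2⟩ := hS a haH
        constructor <;> rw [hcast]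
        · exact (hR a (-a)).mpr (Or.inr ⟨hm, s1⟩)
        · exact (hR (-a) a).mpr (Or.inr ⟨negmemiff a (-a) hm, s2⟩)
    have Rzero1 : ∀ x : G ⧸ H, R 0 x := by
      intro x
      obtain ⟨a, rfl⟩ := QuotientAddGroup.mk_surjective x
      rw [← QuotientAddGroup.mk_zero, hR]
      by_cases ha : a ∈ H
      · exact Or.inl (by simpa using H.neg_mem ha)
      · refine Or.inr ⟨?_, (hZ a ha).2⟩
        intro m
        exact ha (by simpa using H.neg_mem m)
    have Rzero2 : ∀ x : G ⧸ H, R x 0 → x = 0 := by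
      intro x hx
      obtain ⟨a, rfl⟩ := QuotientAddGroup.mk_surjective x
      rw [← QuotientAddGroup.mk_zero, hR] at hx
      rcases hx with hm | ⟨hm, ra0⟩
      · exact (QuotientAddGroup.eq_zero_iff a).mpr (by simpa using hm)
      · have ha : a ∉ H := fun h => hm (by simpa using h)
        exact absurd ra0 (hZ a ha).1
    -- the key ultrametric property
    have RD : ∀ x y : G ⧸ H, R x y → R (x + y) y := by
      intro x y hxy
      by_contra hne
      have hyxy : R y (x + y) := (Rtotal (x + y) y).resolve_left hne
      have hx_xy : R x (x + y) := Rtrans _ _ _ hxy hyxy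
      have hnxyx : ¬R (x + y) x := fun c => hne (Rtrans _ _ _ c hxy)
      have hy_n : R y (-(x + y)) := Rtrans _ _ _ hyxy (Rsymneg (x + y)).1
      have h3 : ¬(R (-(x + y)) x ∧ R x (-(x + y))) := fun c =>
        hnxyx (Rtrans _ _ _ (Rsymneg (x + y)).1 c.1)
      have e := RQ2 y (-(x + y)) x hy_n h3
      have e' : R (x + y) (-y) := by
        have h1 : y + x = x + y := add_comm y x
        have h2 : -(x + y) + x = -y := by abel
        rwa [h1, h2] at e
      exact hne (Rtrans _ _ _ e' (Rsymneg y).2)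
    -- build the value set as the quotient of `G ⧸ H` by `∼`
    letI sd : Setoid (G ⧸ H) :=
      ⟨fun a b => R a b ∧ R b a,
        ⟨fun a => ⟨Rrefl a, Rrefl a⟩,
         fun h => ⟨h.2, h.1⟩,
         fun h1 h2 => ⟨Rtrans _ _ _ h1.1 h2.1, Rtrans _ _ _ h2.2 h1.2⟩⟩⟩
    let Γ : Type u := Quotient sd
    have hcongr : ∀ a₁ b₁ a₂ b₂ : G ⧸ H, a₁ ≈ a₂ → b₁ ≈ b₂ →
        (R b₁ a₁) = (R b₂ a₂) := by
      intro a₁ b₁ a₂ b₂ ha hb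
      exact propext ⟨fun h => Rtrans _ _ _ hb.2 (Rtrans _ _ _ h ha.1),
        fun h => Rtrans _ _ _ hb.1 (Rtrans _ _ _ h ha.2)⟩
    letI lin : LinearOrder Γ :=
      { le := Quotient.lift₂ (fun a b => R b a) hcongr
        le_refl := fun a => Quotient.inductionOn a fun x => Rrefl x
        le_trans := fun a b c => Quotient.inductionOn₃ a b c
          (fun x y z (h1 : R y x) (h2 : R z y) => Rtrans z y x h2 h1)
        le_antisymm := fun a b => Quotient.inductionOn₂ a b
          (fun x y (h1 : R y x) (h2 : R x y) => Quotient.sound ⟨h2, h1⟩)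
        le_total := fun a b => Quotient.inductionOn₂ a b fun x y => (Rtotal y x).imp id id
        toDecidableLE := fun _ _ => Classical.dec _ }
    refine ⟨Γ, lin,
      fun x => if x = 0 then (⊤ : WithTop Γ)
        else ((Quotient.mk sd x : Γ) : WithTop Γ),
      ⟨?_, ?_, ?_⟩, ?_⟩
    · intro x
      beta_reduce
      by_cases hx : x = 0
      · simp [hx]
      · simp [hx, WithTop.coe_ne_top]
    · intro x
      beta_reduce
      by_cases hx : x = 0
      · simp [hx]
      · have hnx : -x ≠ 0 := fun h => hx (neg_eq_zero.mp h)
        rw [if_neg hx, if_neg hnx]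
        exact congrArg (fun γ : Γ => (γ : WithTop Γ))
          (Quotient.sound ⟨(Rsymneg x).2, (Rsymneg x).1⟩)
    · intro x y
      beta_reduce
      by_cases hx : x = 0
      · subst hx
        rw [zero_add]
        exact min_le_right _ _
      by_cases hy : y = 0
      · subst hy
        rw [add_zero]
        exact min_le_left _ _
      by_cases hxy : x + y = 0
      · rw [if_pos hxy]; exact le_top
      rcases Rtotal x y with h | h
      · refine le_trans (min_le_right _ _) ?_
        rw [if_neg hy, if_neg hxy, WithTop.coe_le_coe]
        exact RD x y h
      · refine le_trans (min_le_left _ _) ?_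
        rw [if_neg hx, if_neg hxy, WithTop.coe_le_coe]
        have hd : R (x + y) x := by
          have := RD y x h
          rwa [add_comm y x] at this
        exact hd
    · intro x y
      beta_reduce
      by_cases hy : y = 0
      · subst hy
        rw [if_pos rfl]
        by_cases hx : x = 0
        · subst hx
          exact iff_of_true (Rrefl 0) (by rw [if_pos rfl])
        · rw [if_neg hx]
          exact iff_of_false (fun h => hx (Rzero2 x h)) (WithTop.not_top_le_coe _)
      · rw [if_neg hy]
        by_cases hx : x = 0
        · subst hx
          rw [if_pos rfl]
          exact iff_of_true (Rzero1 y) le_top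
        · rw [if_neg hx, WithTop.coe_le_coe]
          exact Iff.rfl
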